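/- In the reduction from δ-Hitting Set to RDSCP (d = 1, t = δ + 1), any cover T of the constructed universe U with |T| ≤ δ + 1 satisfies |T ∩ F^V| = δ and |T ∩ F^S| = 1. -/

import Mathlib

/-- The universe of the constructed RDSCP instance:
elements `p^j_x` (for `j ∈ [m]`, `x ∈ [δ]`), elements `u^V_Q` for every
`(δ-1)`-subset `Q` of `[n]`, and the special element `u*`. -/
def HSUni (n m δ : ℕ) :=
  (Fin m × Fin δ) ⊕ ({Q : Finset (Fin n) // Q.card = δ - 1} ⊕ Unit)

/-- The set `s^V_i`: all `p^j_x` with `S_j[x] = v_i` together with all `u^V_Q` with `i ∉ Q`. -/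
def sV {n m δ : ℕ} (S : Fin m → Fin δ → Fin n) (i : Fin n) : Set (HSUni n m δ) :=
  {u | (∃ j x, u = Sum.inl (j, x) ∧ S j x = i) ∨ ∃ Q, u = Sum.inr (Sum.inl Q) ∧ i ∉ Q.1}

/-- The set `s^S_j`: the element `u*` together with `U^S \ P^j`. -/
def sS {n m δ : ℕ} (j : Fin m) : Set (HSUni n m δ) :=
  {u | u = Sum.inr (Sum.inr ()) ∨ ∃ j' x, u = Sum.inl (j', x) ∧ j' ≠ j}

/-- The constructed family `F = F^V ∪ F^S`. -/
def HSFam {n m δ : ℕ} (S : Fin m → Fin δ → Fin n) : Set (Set (HSUni n m δ)) :=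
  Set.range (sV S) ∪ Set.range sS

lemma mem_sV_inr {n m δ : ℕ} (S : Fin m → Fin δ → Fin n) (i : Fin n)
    (Q : {Q : Finset (Fin n) // Q.card = δ - 1}) :
    (Sum.inr (Sum.inl Q) : HSUni n m δ) ∈ sV S i ↔ i ∉ Q.1 := by
  constructor
  · rintro (⟨j, x, h, -⟩ | ⟨Q', h, hQ'⟩)
    · cases h
    · injection h with h'
      injection h' with h''
      rw [h'']; exact hQ'
  · intro h
    exact Or.inr ⟨Q, rfl, h⟩

lemma ustar_not_mem_sV {n m δ : ℕ} (S : Fin m → Fin δ → Fin n) (i : Fin n) :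
    (Sum.inr (Sum.inr ()) : HSUni n m δ) ∉ sV S i := by
  rintro (⟨j, x, h, -⟩ | ⟨Q', h, -⟩)
  · cases h
  · injection h with h'
    cases h'

lemma ustar_mem_sS {n m δ : ℕ} (j : Fin m) :
    (Sum.inr (Sum.inr ()) : HSUni n m δ) ∈ sS j := Or.inl rfl

lemma inr_not_mem_sS {n m δ : ℕ} (j : Fin m)
    (Q : {Q : Finset (Fin n) // Q.card = δ - 1}) :
    (Sum.inr (Sum.inl Q) : HSUni n m δ) ∉ sS j := by
  rintro (h | ⟨j', x, h, -⟩)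
  · injection h with h'
    cases h'
  · cases h

lemma sV_injective {n m δ : ℕ} (hδ : 2 ≤ δ) (hδn : δ ≤ n) (S : Fin m → Fin δ → Fin n) :
    Function.Injective (sV S) := by
  intro i i' h
  by_contra hne
  have hsub : ({i'} : Finset (Fin n)) ⊆ Finset.univ.erase i := by
    simp [Finset.subset_iff, Ne.symm hne]
  have hc1 : ({i'} : Finset (Fin n)).card ≤ δ - 1 := by simp; omega
  have hc2 : δ - 1 ≤ (Finset.univ.erase i).card := by
    rw [Finset.card_erase_of_mem (Finset.mem_univ i)]
    simp; omega
  obtain ⟨Q, hQ1, hQ2, hQ3⟩ := Finset.exists_subsuperset_card_eq hsub hc1 hc2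
  have hiQ : i ∉ Q := fun hi => (Finset.mem_erase.mp (hQ2 hi)).1 rfl
  have hi'Q : i' ∈ Q := hQ1 (Finset.mem_singleton_self i')
  have h1 : (Sum.inr (Sum.inl ⟨Q, hQ3⟩) : HSUni n m δ) ∈ sV S i :=
    (mem_sV_inr S i ⟨Q, hQ3⟩).mpr hiQ
  rw [h] at h1
  exact (mem_sV_inr S i' ⟨Q, hQ3⟩).mp h1 hi'Q

open Classical in
/-- In the δ-Hitting Set reduction, any cover `T` of the constructed universe with
`|T| ≤ δ + 1` contains exactly `δ` sets from `F^V` and exactly one set from `F^S`. -/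
theorem stmt8 (n m δ k : ℕ) (hδ : 2 ≤ δ) (hδn : δ ≤ n)
    (S : Fin m → Fin δ → Fin n) (hinj : ∀ j, Function.Injective (S j))
    (T : Finset (Set (HSUni n m δ))) (hT : ↑T ⊆ HSFam S) (hcard : T.card ≤ δ + 1)
    (hcover : ⋃₀ (T : Set (Set (HSUni n m δ))) = Set.univ) :
    (T.filter (fun A => A ∈ Set.range (sV S))).card = δ ∧
    (T.filter (fun A => A ∈ Set.range (sS : Fin m → Set (HSUni n m δ)))).card = 1 := by
  classical
  -- the two ranges are disjoint on T
  have hdisj : ∀ A ∈ T,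
      (A ∈ Set.range (sS : Fin m → Set (HSUni n m δ))) ↔ ¬ A ∈ Set.range (sV S) := by
    intro A hA
    constructor
    · rintro ⟨j, rfl⟩ ⟨i, hi⟩
      have := ustar_mem_sS (n := n) (δ := δ) j
      rw [← hi] at this
      exact ustar_not_mem_sV S i this
    · intro h
      rcases hT hA with h' | h'
      · exact absurd h' h
      · exact h'
  have hsplit : (T.filter (fun A => A ∈ Set.range (sV S))).card +
      (T.filter (fun A => A ∈ Set.range (sS : Fin m → Set (HSUni n m δ)))).card = T.card := by
    rw [Finset.filter_congr hdisj]
    exact Finset.card_filter_add_card_filter_not (fun A => A ∈ Set.range (sV S))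
  -- at least one sS set
  have hS1 : 1 ≤ (T.filter (fun A => A ∈ Set.range (sS : Fin m → Set (HSUni n m δ)))).card := by
    have hust : (Sum.inr (Sum.inr ()) : HSUni n m δ) ∈ ⋃₀ (T : Set (Set (HSUni n m δ))) := by
      rw [hcover]; trivial
    obtain ⟨A, hA, hmem⟩ := hust
    have hAS : A ∈ Set.range (sS : Fin m → Set (HSUni n m δ)) := by
      rcases hT hA with ⟨i, rfl⟩ | h'
      · exact absurd hmem (ustar_not_mem_sV S i)
      · exact h'
    exact Finset.card_pos.mpr ⟨A, Finset.mem_filter.mpr ⟨hA, hAS⟩⟩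
  -- at least δ sV sets
  have hVδ : δ ≤ (T.filter (fun A => A ∈ Set.range (sV S))).card := by
    by_contra hlt
    push_neg at hlt
    set I : Finset (Fin n) := Finset.univ.filter (fun i => sV S i ∈ T) with hI
    have hIim : T.filter (fun A => A ∈ Set.range (sV S)) = I.image (sV S) := by
      ext A
      simp only [Finset.mem_filter, Finset.mem_image, hI, Finset.mem_univ, true_and]
      constructor
      · rintro ⟨hA, i, rfl⟩
        exact ⟨i, hA, rfl⟩
      · rintro ⟨i, hi, rfl⟩
        exact ⟨hi, i, rfl⟩
    have hIcard : I.card ≤ δ - 1 := by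
      have := Finset.card_image_of_injective I (sV_injective hδ hδn S)
      rw [hIim, this] at hlt
      omega
    have hIsub : I ⊆ Finset.univ := Finset.subset_univ I
    have hc2 : δ - 1 ≤ (Finset.univ : Finset (Fin n)).card := by simp; omega
    obtain ⟨Q, hQ1, _, hQ3⟩ := Finset.exists_subsuperset_card_eq hIsub hIcard hc2
    have hu : (Sum.inr (Sum.inl ⟨Q, hQ3⟩) : HSUni n m δ) ∈ ⋃₀ (T : Set (Set (HSUni n m δ))) := by
      rw [hcover]; trivial
    obtain ⟨A, hA, hmem⟩ := hu
    rcases hT hA with ⟨i, rfl⟩ | ⟨j, rfl⟩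
    · have hiQ : i ∉ Q := (mem_sV_inr S i ⟨Q, hQ3⟩).mp hmem
      have : i ∈ I := Finset.mem_filter.mpr ⟨Finset.mem_univ i, hA⟩
      exact hiQ (hQ1 this)
    · exact inr_not_mem_sS j ⟨Q, hQ3⟩ hmem
  refine ⟨?_, ?_⟩ <;> omega
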